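/- The function ψ(x) = x√(2/π) e^{−x²/8} − x² Φ(−x/2) admits a unique global maximizer x* on [0,∞); moreover ψ'(0) > 0, ψ'(x) < 0 for large x, and x ↦ e^{x²/8} ψ'(x) is strictly decreasing on (0,∞). -/

import Mathlib

open Real Set Filter Topology

open MeasureTheory intervalIntegral

noncomputable def Phi (x : ℝ) : ℝ :=
  (Real.sqrt (2 * Real.pi))⁻¹ * ∫ y in Set.Iic x, Real.exp (-y ^ 2 / 2)

lemma f0_int : Integrable (fun y : ℝ => Real.exp (-y ^ 2 / 2)) := by
  have := integrable_exp_neg_mul_sq (b := (1:ℝ)/2) (by norm_num)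
  convert this using 2 with y
  ring_nf

lemma f0_cont : Continuous (fun y : ℝ => Real.exp (-y ^ 2 / 2)) := by
  continuity

lemma Phi_hasDeriv (x : ℝ) :
    HasDerivAt Phi ((Real.sqrt (2 * Real.pi))⁻¹ * Real.exp (-x ^ 2 / 2)) x := by
  have key : ∀ u : ℝ, Phi u =
      (Real.sqrt (2 * Real.pi))⁻¹ *
        ((∫ y in Set.Iic (0:ℝ), Real.exp (-y ^ 2 / 2)) + ∫ y in (0:ℝ)..u, Real.exp (-y ^ 2 / 2)) := by
    intro u
    rw [Phi, ← integral_Iic_sub_Iic f0_int.integrableOn f0_int.integrableOn]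
    ring
  have h1 : HasDerivAt (fun u => ∫ y in (0:ℝ)..u, Real.exp (-y ^ 2 / 2))
      (Real.exp (-x ^ 2 / 2)) x :=
    integral_hasDerivAt_right (f0_int.intervalIntegrable)
      f0_cont.aestronglyMeasurable.stronglyMeasurableAtFilter f0_cont.continuousAt
  have := ((h1.const_add (∫ y in Set.Iic (0:ℝ), Real.exp (-y ^ 2 / 2))).const_mul ((Real.sqrt (2 * Real.pi))⁻¹))
  have heq : Phi = fun u => (Real.sqrt (2 * Real.pi))⁻¹ *
      ((∫ y in Set.Iic (0:ℝ), Real.exp (-y ^ 2 / 2)) + ∫ y in (0:ℝ)..u, Real.exp (-y ^ 2 / 2)) :=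
    funext key
  rw [heq]
  exact this

noncomputable def millsH (t : ℝ) : ℝ := t / (1 + t ^ 2) * Real.exp (-t ^ 2 / 2)

lemma one_add_sq_pos (t : ℝ) : (0:ℝ) < 1 + t ^ 2 := by positivity

lemma expsq_hasDeriv (t : ℝ) :
    HasDerivAt (fun y : ℝ => Real.exp (-y ^ 2 / 2)) (-t * Real.exp (-t ^ 2 / 2)) t := by
  have h : HasDerivAt (fun y : ℝ => -y ^ 2 / 2) (-t) t := by
    have := ((hasDerivAt_pow 2 t).neg.div_const 2)
    refine this.congr_deriv ?_
    ring
  simpa [mul_comm] using h.exp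

lemma millsH_hasDeriv (t : ℝ) :
    HasDerivAt millsH
      (2 * Real.exp (-t ^ 2 / 2) / (1 + t ^ 2) ^ 2 - Real.exp (-t ^ 2 / 2)) t := by
  have h1 : HasDerivAt (fun y : ℝ => y / (1 + y ^ 2)) ((1 - t ^ 2) / (1 + t ^ 2) ^ 2) t := by
    have hne : (1 + t ^ 2) ≠ 0 := (one_add_sq_pos t).ne'
    have := (hasDerivAt_id t).div ((hasDerivAt_pow 2 t).const_add 1) hne
    refine this.congr_deriv ?_
    simp only [id_eq]
    field_simp
    ring
  have := h1.mul (expsq_hasDeriv t)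
  refine this.congr_deriv ?_
  have hne : (1 + t ^ 2) ≠ 0 := (one_add_sq_pos t).ne'
  field_simp
  ring

lemma millsH_tendsto : Tendsto millsH atTop (𝓝 0) := by
  have hexp : Tendsto (fun t : ℝ => Real.exp (-t ^ 2 / 2)) atTop (𝓝 0) := by
    apply Real.tendsto_exp_atBot.comp
    apply Tendsto.atBot_div_const (by norm_num)
    exact tendsto_neg_atBot_iff.mpr (tendsto_pow_atTop (by norm_num))
  apply squeeze_zero' (g := fun t : ℝ => Real.exp (-t ^ 2 / 2))
  · filter_upwards [eventually_ge_atTop (0:ℝ)] with t ht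
    exact mul_nonneg (div_nonneg ht (one_add_sq_pos t).le) (Real.exp_pos _).le
  · filter_upwards [eventually_ge_atTop (0:ℝ)] with t ht
    have : t / (1 + t ^ 2) ≤ 1 := by
      rw [div_le_one (one_add_sq_pos t)]
      nlinarith
    calc millsH t ≤ 1 * Real.exp (-t ^ 2 / 2) :=
          mul_le_mul_of_nonneg_right this (Real.exp_pos _).le
      _ = _ := one_mul _
  · exact hexp

lemma small_int : Integrable (fun y : ℝ => 2 * Real.exp (-y ^ 2 / 2) / (1 + y ^ 2) ^ 2) := by
  apply (f0_int.const_mul 2).mono'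
  · exact (((continuous_const.mul f0_cont).div (by continuity) (fun y => by positivity))).aestronglyMeasurable
  · filter_upwards with y
    rw [Real.norm_eq_abs, abs_of_nonneg (by positivity)]
    rw [div_le_iff₀ (by positivity)]
    nlinarith [mul_nonneg (Real.exp_pos (-y^2/2)).le (by positivity : (0:ℝ) ≤ 2*y^2+y^4)]

lemma millsH'_int (t : ℝ) : IntegrableOn
    (fun y : ℝ => 2 * Real.exp (-y ^ 2 / 2) / (1 + y ^ 2) ^ 2 - Real.exp (-y ^ 2 / 2)) (Ioi t) :=
  ((small_int.sub f0_int)).integrableOn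

lemma integral_Ioi_eq (t : ℝ) :
    ∫ y in Ioi t, Real.exp (-y ^ 2 / 2)
      = millsH t + ∫ y in Ioi t, 2 * Real.exp (-y ^ 2 / 2) / (1 + y ^ 2) ^ 2 := by
  have hFTC : ∫ y in Ioi t,
      (2 * Real.exp (-y ^ 2 / 2) / (1 + y ^ 2) ^ 2 - Real.exp (-y ^ 2 / 2)) = 0 - millsH t :=
    integral_Ioi_of_hasDerivAt_of_tendsto' (fun x _ => millsH_hasDeriv x) (millsH'_int t)
      millsH_tendsto
  rw [integral_sub small_int.integrableOn f0_int.integrableOn] at hFTC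
  linarith

lemma small_integral_pos (t : ℝ) :
    0 < ∫ y in Ioi t, 2 * Real.exp (-y ^ 2 / 2) / (1 + y ^ 2) ^ 2 := by
  rw [setIntegral_pos_iff_support_of_nonneg_ae]
  · have : (Function.support fun y : ℝ => 2 * Real.exp (-y ^ 2 / 2) / (1 + y ^ 2) ^ 2) = univ := by
      ext y; simp only [Function.mem_support, mem_univ, iff_true]
      positivity
    rw [this, univ_inter]
    simp [Real.volume_Ioi]
  · filter_upwards with y
    positivity
  · exact small_int.integrableOn

/-- Mill's ratio lower bound. -/
lemma mills (t : ℝ) :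
    millsH t < ∫ y in Iic (-t), Real.exp (-y ^ 2 / 2) := by
  have hrefl : ∫ y in Iic (-t), Real.exp (-y ^ 2 / 2) = ∫ y in Ioi t, Real.exp (-y ^ 2 / 2) := by
    rw [← integral_comp_neg_Ioi]
    congr 1 with y
    ring_nf
  rw [hrefl, integral_Ioi_eq t]
  linarith [small_integral_pos t]

/-- `ψ(x) = x√(2/π) e^{−x²/8} − x² Φ(−x/2)`. -/
noncomputable def psi (x : ℝ) : ℝ :=
  x * Real.sqrt (2 / Real.pi) * Real.exp (-x ^ 2 / 8) - x ^ 2 * Phi (-x / 2)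

lemma key_const : Real.sqrt (2 / Real.pi) = 2 * (Real.sqrt (2 * Real.pi))⁻¹ := by
  have hπ : (0:ℝ) < Real.pi := Real.pi_pos
  have h2 := Real.mul_self_sqrt (show (0:ℝ) ≤ 2 * Real.pi by positivity)
  have h3 : Real.sqrt (2 / Real.pi) = Real.sqrt (2 * Real.pi) / Real.pi := by
    rw [show (2:ℝ) / Real.pi = 2 * Real.pi / Real.pi ^ 2 by field_simp,
      Real.sqrt_div (by positivity) (Real.pi ^ 2), Real.sqrt_sq hπ.le]
  have hs : (0:ℝ) < Real.sqrt (2 * Real.pi) := Real.sqrt_pos.mpr (by positivity)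
  have ha : (Real.sqrt (2 * Real.pi))⁻¹ = Real.sqrt (2 * Real.pi) / (2 * Real.pi) := by
    rw [eq_div_iff (by positivity : (2 * Real.pi : ℝ) ≠ 0), ← h2]
    rw [Real.sqrt_mul_self hs.le]
    field_simp
  rw [h3, ha]
  ring

lemma sqrt2pi_pos : (0:ℝ) < Real.sqrt (2 * Real.pi) :=
  Real.sqrt_pos.mpr (by positivity)

lemma exp8_hasDeriv (x : ℝ) :
    HasDerivAt (fun y : ℝ => Real.exp (-y ^ 2 / 8)) (-x / 4 * Real.exp (-x ^ 2 / 8)) x := by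
  have h : HasDerivAt (fun y : ℝ => -y ^ 2 / 8) (-x / 4) x := by
    have := ((hasDerivAt_pow 2 x).neg.div_const 8)
    refine this.congr_deriv ?_; ring
  simpa [mul_comm] using h.exp

lemma expp8_hasDeriv (x : ℝ) :
    HasDerivAt (fun y : ℝ => Real.exp (y ^ 2 / 8)) (x / 4 * Real.exp (x ^ 2 / 8)) x := by
  have h : HasDerivAt (fun y : ℝ => y ^ 2 / 8) (x / 4) x := by
    have := ((hasDerivAt_pow 2 x).div_const 8)
    refine this.congr_deriv ?_; ring
  simpa [mul_comm] using h.exp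

lemma PhiNeg_hasDeriv (x : ℝ) :
    HasDerivAt (fun y : ℝ => Phi (-y / 2))
      (-(1 / 2) * ((Real.sqrt (2 * Real.pi))⁻¹ * Real.exp (-x ^ 2 / 8))) x := by
  have hin : HasDerivAt (fun y : ℝ => -y / 2) (-(1/2) : ℝ) x := by
    have := ((hasDerivAt_id x).neg.div_const 2)
    refine this.congr_deriv ?_; ring
  have := (Phi_hasDeriv (-x / 2)).comp x hin
  refine this.congr_deriv ?_
  rw [show -(-x/2) ^ 2 / 2 = -x^2/8 by ring]
  ring

lemma psi_hasDeriv (x : ℝ) :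
    HasDerivAt psi
      (Real.sqrt (2 / Real.pi) * Real.exp (-x ^ 2 / 8) - 2 * x * Phi (-x / 2)) x := by
  have hA : HasDerivAt (fun y : ℝ => y * Real.sqrt (2 / Real.pi) * Real.exp (-y ^ 2 / 8))
      (1 * Real.sqrt (2 / Real.pi) * Real.exp (-x ^ 2 / 8)
        + x * Real.sqrt (2 / Real.pi) * (-x / 4 * Real.exp (-x ^ 2 / 8))) x :=
    ((hasDerivAt_id x).mul_const (Real.sqrt (2 / Real.pi))).mul (exp8_hasDeriv x)
  have hB : HasDerivAt (fun y : ℝ => y ^ 2 * Phi (-y / 2))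
      ((2 * x ^ 1) * Phi (-x / 2)
        + x ^ 2 * (-(1 / 2) * ((Real.sqrt (2 * Real.pi))⁻¹ * Real.exp (-x ^ 2 / 8)))) x :=
    (hasDerivAt_pow 2 x).mul (PhiNeg_hasDeriv x)
  have := hA.sub hB
  refine this.congr_deriv ?_
  rw [key_const]
  ring

noncomputable def Gfun (x : ℝ) : ℝ :=
  Real.sqrt (2 / Real.pi) - 2 * x * Real.exp (x ^ 2 / 8) * Phi (-x / 2)

lemma hEe (x : ℝ) : Real.exp (x ^ 2 / 8) * Real.exp (-x ^ 2 / 8) = 1 := by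
  rw [← Real.exp_add]; ring_nf; exact Real.exp_zero

lemma deriv_psi_eq (x : ℝ) :
    deriv psi x = Real.sqrt (2 / Real.pi) * Real.exp (-x ^ 2 / 8) - 2 * x * Phi (-x / 2) :=
  (psi_hasDeriv x).deriv

lemma g_eq : (fun x => Real.exp (x ^ 2 / 8) * deriv psi x) = Gfun := by
  funext x
  rw [deriv_psi_eq, Gfun]
  linear_combination (Real.sqrt (2 / Real.pi)) * hEe x

lemma deriv_psi_eq_G (x : ℝ) : deriv psi x = Real.exp (-x ^ 2 / 8) * Gfun x := by
  rw [deriv_psi_eq, Gfun]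
  linear_combination (2 * x * Phi (-x/2)) * hEe x

lemma G_hasDeriv (x : ℝ) :
    HasDerivAt Gfun
      (-2 * (1 + x ^ 2 / 4) * Real.exp (x ^ 2 / 8) * Phi (-x / 2)
        + x * (Real.sqrt (2 * Real.pi))⁻¹) x := by
  have h1 : HasDerivAt (fun y : ℝ => 2 * y * Real.exp (y ^ 2 / 8))
      (2 * Real.exp (x ^ 2 / 8) + 2 * x * (x / 4 * Real.exp (x ^ 2 / 8))) x := by
    have := ((hasDerivAt_id x).const_mul 2).mul (expp8_hasDeriv x)
    refine this.congr_deriv ?_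
    simp only [id_eq]
    ring
  have h2 := (h1.mul (PhiNeg_hasDeriv x)).const_sub (Real.sqrt (2 / Real.pi))
  refine h2.congr_deriv ?_
  have := hEe x
  linear_combination (x * (Real.sqrt (2 * Real.pi))⁻¹) * this

lemma Phi_lower (x : ℝ) :
    (Real.sqrt (2 * Real.pi))⁻¹ * millsH (x / 2) < Phi (-x / 2) := by
  have h := mills (x / 2)
  have hc : (0:ℝ) < (Real.sqrt (2 * Real.pi))⁻¹ := inv_pos.mpr sqrt2pi_pos
  have := mul_lt_mul_of_pos_left h hc
  rw [Phi, show -x / 2 = -(x / 2) by ring]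
  exact this

lemma millsH_half (x : ℝ) :
    millsH (x / 2) = (x / 2) / (1 + x ^ 2 / 4) * Real.exp (-x ^ 2 / 8) := by
  rw [millsH, show -(x/2) ^ 2 / 2 = -x ^ 2 / 8 by ring, show 1 + (x/2) ^ 2 = 1 + x ^ 2 / 4 by ring]

lemma G_deriv_neg {x : ℝ} (hx : 0 < x) : deriv Gfun x < 0 := by
  rw [(G_hasDeriv x).deriv]
  set c := (Real.sqrt (2 * Real.pi))⁻¹ with hc
  have hcpos : (0:ℝ) < c := inv_pos.mpr sqrt2pi_pos
  have ht : (0:ℝ) < 1 + x ^ 2 / 4 := by positivity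
  have hE : (0:ℝ) < Real.exp (x ^ 2 / 8) := Real.exp_pos _
  have hkey : 2 * (1 + x ^ 2 / 4) * Real.exp (x ^ 2 / 8) * (c * millsH (x / 2)) = x * c := by
    rw [millsH_half]
    field_simp
    rw [← neg_div]
    linear_combination hEe x
  have hmul := mul_lt_mul_of_pos_left (Phi_lower x)
    (by positivity : (0:ℝ) < 2 * (1 + x ^ 2 / 4) * Real.exp (x ^ 2 / 8))
  rw [hkey] at hmul
  nlinarith [hmul]

lemma G_bound {x : ℝ} (hx : 0 < x) :
    Gfun x < (Real.sqrt (2 * Real.pi))⁻¹ * (2 - x ^ 2 / (1 + x ^ 2 / 4)) := by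
  set c := (Real.sqrt (2 * Real.pi))⁻¹ with hc
  have hcpos : (0:ℝ) < c := inv_pos.mpr sqrt2pi_pos
  have ht : (0:ℝ) < 1 + x ^ 2 / 4 := by positivity
  have hkey : 2 * x * Real.exp (x ^ 2 / 8) * (c * millsH (x / 2))
      = c * (x ^ 2 / (1 + x ^ 2 / 4)) := by
    rw [millsH_half]
    field_simp
    rw [← neg_div]
    linear_combination hEe x
  have hmul := mul_lt_mul_of_pos_left (Phi_lower x)
    (by positivity : (0:ℝ) < 2 * x * Real.exp (x ^ 2 / 8))
  rw [hkey] at hmul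
  rw [Gfun, key_const]
  nlinarith [hmul]

lemma G_three_neg : Gfun 3 < 0 := by
  have h := G_bound (by norm_num : (0:ℝ) < 3)
  have hcpos : (0:ℝ) < (Real.sqrt (2 * Real.pi))⁻¹ := inv_pos.mpr sqrt2pi_pos
  have : ((2:ℝ) - 3 ^ 2 / (1 + 3 ^ 2 / 4)) < 0 := by norm_num
  nlinarith

lemma G_zero_pos : 0 < Gfun 0 := by
  rw [Gfun]
  simp
  positivity

lemma G_diff : Differentiable ℝ Gfun := fun x => (G_hasDeriv x).differentiableAt

lemma G_cont : Continuous Gfun := G_diff.continuous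

lemma G_anti : StrictAntiOn Gfun (Ici 0) := by
  apply strictAntiOn_of_deriv_neg (convex_Ici 0) G_cont.continuousOn
  intro x hx
  rw [interior_Ici] at hx
  exact G_deriv_neg hx

lemma exists_root : ∃ z ∈ Ioo (0:ℝ) 3, Gfun z = 0 := by
  have h := intermediate_value_Ioo' (by norm_num : (0:ℝ) ≤ 3) G_cont.continuousOn
  have h0 : (0:ℝ) ∈ Ioo (Gfun 3) (Gfun 0) := ⟨G_three_neg, G_zero_pos⟩
  obtain ⟨z, hz, hz0⟩ := h h0
  exact ⟨z, hz, hz0⟩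

lemma psi_diff : Differentiable ℝ psi := fun x => (psi_hasDeriv x).differentiableAt

lemma psi_mono {z : ℝ} (hz : 0 < z) (hGz : Gfun z = 0) : StrictMonoOn psi (Icc 0 z) := by
  apply strictMonoOn_of_deriv_pos (convex_Icc 0 z) psi_diff.continuous.continuousOn
  intro x hx
  rw [interior_Icc] at hx
  rw [deriv_psi_eq_G]
  have hGx : 0 < Gfun x := by
    have := G_anti (le_of_lt hx.1 : (0:ℝ) ≤ x) hz.le hx.2
    rwa [hGz] at this
  positivity

lemma psi_anti {z : ℝ} (hz : 0 < z) (hGz : Gfun z = 0) : StrictAntiOn psi (Ici z) := by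
  apply strictAntiOn_of_deriv_neg (convex_Ici z) psi_diff.continuous.continuousOn
  intro x hx
  rw [interior_Ici] at hx
  rw [deriv_psi_eq_G]
  have hGx : Gfun x < 0 := by
    have := G_anti hz.le (le_of_lt (lt_trans hz hx) : (0:ℝ) ≤ x) hx
    rwa [hGz] at this
  exact mul_neg_of_pos_of_neg (Real.exp_pos _) hGx

/-- `ψ` admits a unique global maximizer on `[0,∞)`; moreover `ψ'(0) > 0`, `ψ' < 0` for large `x`,
and `x ↦ e^{x²/8} ψ'(x)` is strictly decreasing on `(0,∞)`. -/
theorem psi_unique_max :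
    (∃! x : ℝ, x ∈ Set.Ici (0 : ℝ) ∧ IsMaxOn psi (Set.Ici 0) x) ∧
    0 < deriv psi 0 ∧
    (∀ᶠ x in atTop, deriv psi x < 0) ∧
    StrictAntiOn (fun x => Real.exp (x ^ 2 / 8) * deriv psi x) (Set.Ioi 0) := by
  obtain ⟨z, hzmem, hGz⟩ := exists_root
  have hz : 0 < z := hzmem.1
  have hmono := psi_mono hz hGz
  have hanti := psi_anti hz hGz
  have hmax : IsMaxOn psi (Set.Ici 0) z := by
    intro y hy
    simp only [mem_setOf_eq]
    rcases le_or_gt y z with h | h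
    · exact hmono.monotoneOn ⟨hy, h⟩ ⟨le_refl 0 |>.trans hz.le, le_refl z⟩ h
    · exact (hanti.antitoneOn (Set.self_mem_Ici) (le_of_lt h : z ≤ y)) h.le
  refine ⟨⟨z, ⟨hz.le, hmax⟩, ?_⟩, ?_, ?_, ?_⟩
  · rintro y ⟨hy0, hymax⟩
    by_contra hne
    rcases lt_or_gt_of_ne hne with h | h
    · have h1 : psi y < psi z := hmono ⟨hy0, h.le⟩ ⟨hz.le, le_refl z⟩ h
      have h2 : psi z ≤ psi y := hymax (mem_Ici.mpr hz.le)
      linarith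
    · have h1 : psi y < psi z := by
        have := hanti (Set.self_mem_Ici) (le_of_lt h : z ≤ y) h
        exact this
      have h2 : psi z ≤ psi y := hymax (mem_Ici.mpr hz.le)
      linarith
  · rw [deriv_psi_eq]
    simp [Phi]
    positivity
  · filter_upwards [eventually_ge_atTop (4:ℝ)] with x hx
    rw [deriv_psi_eq_G]
    have hGx : Gfun x < 0 := by
      have h3x : (3:ℝ) < x := by linarith
      have := G_anti (mem_Ici.mpr (by norm_num)) (mem_Ici.mpr (by linarith)) h3x
      linarith [G_three_neg]
    exact mul_neg_of_pos_of_neg (Real.exp_pos _) hGx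
  · rw [g_eq]
    exact G_anti.mono (Ioi_subset_Ici (le_refl 0))
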